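/- The coordinates of the invariant fluid solution are determined by its norm via z_i* = λ E[min{‖z*‖_1 B_1^i, D}] − λ E[min{‖z*‖_1 B_1^{i-1}, D}] for each i = 1,...,I, where B_1^j = B_1 + ... + B_j with B_l ~ Exp(μ_l) independent of D ~ Exp(ν). -/

import Mathlib

open MeasureTheory ProbabilityTheory Set

open Real
open scoped ENNReal NNReal

lemma expMeasure_apply {r : ℝ} {s : Set ℝ} (hs : MeasurableSet s) :
    expMeasure r s = ∫⁻ x in s, exponentialPDF r x := by
  rw [expMeasure, gammaMeasure, withDensity_apply _ hs]; rfl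

lemma expMeasure_Iio_zero (r : ℝ) : expMeasure r (Iio 0) = 0 := by
  rw [expMeasure_apply measurableSet_Iio]
  exact lintegral_exponentialPDF_of_nonpos le_rfl

lemma expMeasure_Ioi {r : ℝ} (hr : 0 < r) {t : ℝ} (ht : 0 ≤ t) :
    expMeasure r (Ioi t) = ENNReal.ofReal (rexp (-(r * t))) := by
  have h := isProbabilityMeasure_expMeasure hr
  have hIic : expMeasure r (Iic t) = ENNReal.ofReal (1 - rexp (-(r * t))) := by
    rw [expMeasure_apply measurableSet_Iic, lintegral_exponentialPDF_eq_antiDeriv hr, if_pos ht]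
  have := measure_compl (μ := expMeasure r) measurableSet_Iic (measure_ne_top _ (Iic t))
  rw [compl_Iic] at this
  rw [this, hIic, measure_univ, ← ENNReal.ofReal_one, ← ENNReal.ofReal_sub _ (sub_nonneg.mpr (Real.exp_le_one_iff.mpr (by nlinarith)))]
  ring_nf

set_option maxHeartbeats 800000 in
lemma integral_exp_neg_mul_Ioi {b : ℝ} (hb : 0 < b) :
    ∫ x in Ioi (0:ℝ), rexp (-(b * x)) = 1 / b := by
  have hderiv : ∀ x ∈ Ici (0:ℝ), HasDerivAt (fun x => -rexp (-(b * x)) / b)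
      (rexp (-(b * x))) x := by
    intro x _
    have h2 := (hasDerivAt_neg_exp_mul_exp (r := b) (x := x)).div_const b
    rwa [mul_div_cancel_left₀ _ hb.ne'] at h2
  have htend : Filter.Tendsto (fun x : ℝ => -rexp (-(b * x)) / b) Filter.atTop (nhds 0) := by
    have : Filter.Tendsto (fun x : ℝ => rexp (-(b * x))) Filter.atTop (nhds 0) := by
      simp_rw [neg_mul_eq_neg_mul]
      exact Real.tendsto_exp_comp_nhds_zero.mpr
        (Filter.tendsto_id.const_mul_atTop_of_neg (neg_lt_zero.mpr hb))
    simpa [neg_div] using (this.div_const b).neg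
  have hcont : ContinuousWithinAt (fun x => -rexp (-(b * x)) / b) (Ici (0:ℝ)) 0 := by
    apply Continuous.continuousWithinAt
    exact ((Real.continuous_exp.comp ((continuous_const.mul continuous_id).neg)).neg).div_const b
  have hint : IntegrableOn (fun x => rexp (-(b * x))) (Ioi (0:ℝ)) := by
    simpa [neg_mul] using exp_neg_integrableOn_Ioi (0:ℝ) hb
  have h := integral_Ioi_of_hasDerivAt_of_tendsto hcont
    (fun x hx => hderiv x (mem_Ici.mpr (le_of_lt hx))) hint htend
  rw [h]; simp [mul_zero]; ring

lemma lintegral_exp_neg_expMeasure {r a : ℝ} (hr : 0 < r) (ha : 0 ≤ a) :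
    ∫⁻ x, ENNReal.ofReal (rexp (-(a * x))) ∂(expMeasure r) = ENNReal.ofReal (r / (r + a)) := by
  have hm : Measurable (gammaPDF 1 r) := (measurable_gammaPDFReal 1 r).ennreal_ofReal
  rw [expMeasure, gammaMeasure, lintegral_withDensity_eq_lintegral_mul _ hm
    (by fun_prop : Measurable fun x : ℝ => rexp (-(a * x))).ennreal_ofReal]
  rw [← lintegral_add_compl (μ := volume) _ (measurableSet_Ioi (a := (0:ℝ)))]
  have h2 : ∫⁻ x in (Ioi (0:ℝ))ᶜ, (gammaPDF 1 r * fun x => ENNReal.ofReal (rexp (-(a * x)))) x = 0 := by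
    rw [compl_Ioi, Measure.restrict_congr_set Iio_ae_eq_Iic.symm]
    rw [setLIntegral_congr_fun measurableSet_Iio (fun x (hx : x < 0) => ?_),
      lintegral_zero]
    simp [gammaPDF_of_neg hx]
  have h1 : ∫⁻ x in Ioi (0:ℝ), (gammaPDF 1 r * fun x => ENNReal.ofReal (rexp (-(a * x)))) x
      = ENNReal.ofReal (r / (r + a)) := by
    rw [setLIntegral_congr_fun measurableSet_Ioi (fun x (hx : (0:ℝ) < x) => ?_)]
    · rw [← ofReal_integral_eq_lintegral_ofReal (f := fun x => r * rexp (-((r + a) * x)))]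
      · rw [MeasureTheory.integral_const_mul, integral_exp_neg_mul_Ioi (by linarith)]
        congr 1; field_simp
      · have hra : (0:ℝ) < r + a := by linarith
        have hint : IntegrableOn (fun x => rexp (-((r + a) * x))) (Ioi (0:ℝ)) := by
          exact (exp_neg_integrableOn_Ioi (0:ℝ) hra).congr_fun
            (fun x _ => by simp only [neg_mul]) measurableSet_Ioi
        exact hint.const_mul r
      · exact ae_of_all _ fun x => by positivity
    · show gammaPDF 1 r x * ENNReal.ofReal (rexp (-(a * x))) = _
      have : gammaPDF 1 r x = ENNReal.ofReal (r * rexp (-(r * x))) := by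
        rw [show gammaPDF 1 r x = exponentialPDF r x from rfl, exponentialPDF_of_nonneg hx.le]
      rw [this, ← ENNReal.ofReal_mul (by positivity)]
      congr 1
      rw [mul_assoc, ← Real.exp_add]
      ring_nf
  rw [h1, h2, add_zero]

lemma integral_exp_neg_expMeasure {r a : ℝ} (hr : 0 < r) (ha : 0 ≤ a) :
    ∫ x, rexp (-(a * x)) ∂(expMeasure r) = r / (r + a) := by
  rw [integral_eq_lintegral_of_nonneg_ae (ae_of_all _ fun x => (Real.exp_pos _).le)
    (by fun_prop : Measurable fun x : ℝ => rexp (-(a * x))).aestronglyMeasurable,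
    lintegral_exp_neg_expMeasure hr ha, ENNReal.toReal_ofReal (by positivity)]

lemma integral_min_exp_indep {Ω : Type*} [MeasurableSpace Ω] (P : Measure Ω)
    [IsProbabilityMeasure P] {ν : ℝ} (hν : 0 < ν) {A D : Ω → ℝ}
    (hA : Measurable A) (hD : Measurable D) (hAnn : 0 ≤ᵐ[P] A)
    (hDdist : Measure.map D P = expMeasure ν) (hind : IndepFun A D P) :
    ∫ ω, min (A ω) (D ω) ∂P = (1 - ∫ ω, rexp (-(ν * A ω)) ∂P) / ν := by
  have h0 : P (D ⁻¹' (Iio 0)) = 0 := by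
    rw [← Measure.map_apply hD measurableSet_Iio, hDdist, expMeasure_Iio_zero]
  have hDnn : ∀ᵐ ω ∂P, 0 ≤ D ω := by
    rw [ae_iff]
    convert h0 using 2
    ext ω; simp [not_le]
  have hAnn' : ∀ᵐ ω ∂P, 0 ≤ A ω := by
    filter_upwards [hAnn] with ω h; simpa using h
  -- integrability of exp (-(ν * A ω))
  have hexp_meas : Measurable fun ω => rexp (-(ν * A ω)) := by fun_prop
  have hexp_int : Integrable (fun ω => rexp (-(ν * A ω))) P := by
    refine Integrable.mono' (integrable_const 1) hexp_meas.aestronglyMeasurable ?_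
    filter_upwards [hAnn'] with ω hω
    rw [Real.norm_eq_abs, abs_of_pos (Real.exp_pos _)]
    exact Real.exp_le_one_iff.mpr (by nlinarith)
  have hmin_nn : 0 ≤ᵐ[P] fun ω => min (A ω) (D ω) := by
    filter_upwards [hAnn', hDnn] with ω h1 h2; exact le_min h1 h2
  -- the pair function
  set g : ℝ × Ω → ℝ≥0∞ := fun p =>
    if p.1 < A p.2 then ENNReal.ofReal (rexp (-(ν * p.1))) else 0 with hg
  have hgmeas : Measurable g := by
    apply Measurable.ite (measurableSet_lt measurable_fst (hA.comp measurable_snd))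
    · fun_prop
    · exact measurable_const
  -- layer cake
  have step1 : ∫⁻ ω, ENNReal.ofReal (min (A ω) (D ω)) ∂P
      = ∫⁻ t in Ioi (0:ℝ), P {ω | t < min (A ω) (D ω)} :=
    lintegral_eq_lintegral_meas_lt P hmin_nn (hA.min hD).aemeasurable
  have step2 : ∀ t : ℝ, 0 ≤ t → P {ω | t < min (A ω) (D ω)}
      = P (A ⁻¹' Ioi t) * ENNReal.ofReal (rexp (-(ν * t))) := by
    intro t ht
    have hset : {ω | t < min (A ω) (D ω)} = A ⁻¹' Ioi t ∩ D ⁻¹' Ioi t := by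
      ext ω; simp [lt_min_iff]
    rw [hset, hind.measure_inter_preimage_eq_mul _ _ measurableSet_Ioi measurableSet_Ioi,
      ← Measure.map_apply hD measurableSet_Ioi, hDdist, expMeasure_Ioi hν ht]
  have step3 : ∀ t : ℝ, P (A ⁻¹' Ioi t) * ENNReal.ofReal (rexp (-(ν * t)))
      = ∫⁻ ω, g (t, ω) ∂P := by
    intro t
    have : (fun ω => g (t, ω))
        = (A ⁻¹' Ioi t).indicator (fun _ => ENNReal.ofReal (rexp (-(ν * t)))) := by
      ext ω
      by_cases h : t < A ω <;> simp [hg, h, Set.indicator, mem_preimage, mem_Ioi]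
    rw [this, lintegral_indicator (hA measurableSet_Ioi) _, setLIntegral_const, mul_comm]
  -- inner integral for fixed ω
  have inner : ∀ ω, 0 ≤ A ω →
      ∫⁻ t in Ioi (0:ℝ), g (t, ω) = ENNReal.ofReal ((1 - rexp (-(ν * A ω))) / ν) := by
    intro ω hω
    have hfun : (fun t : ℝ => g (t, ω))
        = (Iio (A ω)).indicator (fun t => ENNReal.ofReal (rexp (-(ν * t)))) := by
      ext t
      by_cases h : t < A ω <;> simp [hg, h, Set.indicator, mem_Iio]
    rw [hfun, lintegral_indicator measurableSet_Iio _, Measure.restrict_restrict measurableSet_Iio]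
    have hII : Iio (A ω) ∩ Ioi (0:ℝ) = Ioo 0 (A ω) := by
      ext t; simp [mem_Ioo, mem_Iio, mem_Ioi, and_comm]
    rw [hII, ← ofReal_integral_eq_lintegral_ofReal]
    · congr 1
      rw [← integral_Ioc_eq_integral_Ioo, ← intervalIntegral.integral_of_le hω]
      have hd : ∀ t ∈ uIcc (0:ℝ) (A ω), HasDerivAt (fun s => -rexp (-(ν * s)) / ν)
          (rexp (-(ν * t))) t := by
        intro t _
        have h2 := (hasDerivAt_neg_exp_mul_exp (r := ν) (x := t)).div_const ν
        rwa [mul_div_cancel_left₀ _ hν.ne'] at h2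
      rw [intervalIntegral.integral_eq_sub_of_hasDerivAt hd]
      · simp [mul_zero]; ring
      · apply Continuous.intervalIntegrable; fun_prop
    · have : IntegrableOn (fun t => rexp (-(ν * t))) (Ioc 0 (A ω)) := by
        apply Continuous.integrableOn_Ioc; fun_prop
      exact this.mono_set Ioo_subset_Ioc_self
    · exact ae_of_all _ fun t => (Real.exp_pos _).le
  -- put it together in ℝ≥0∞
  have swap : ∫⁻ t in Ioi (0:ℝ), ∫⁻ ω, g (t, ω) ∂P
      = ∫⁻ ω, (∫⁻ t in Ioi (0:ℝ), g (t, ω)) ∂P :=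
    lintegral_lintegral_swap hgmeas.aemeasurable
  have key : ∫⁻ ω, ENNReal.ofReal (min (A ω) (D ω)) ∂P
      = ∫⁻ ω, ENNReal.ofReal ((1 - rexp (-(ν * A ω))) / ν) ∂P := by
    rw [step1]
    rw [setLIntegral_congr_fun measurableSet_Ioi
      (fun t (ht : (0:ℝ) < t) => by rw [step2 t ht.le, step3 t])]
    rw [swap]
    apply lintegral_congr_ae
    filter_upwards [hAnn'] with ω hω
    exact inner ω hω
  -- convert to Bochner integrals
  have hrhs_int : Integrable (fun ω => (1 - rexp (-(ν * A ω))) / ν) P :=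
    ((integrable_const 1).sub hexp_int).div_const ν
  have hrhs_nn : 0 ≤ᵐ[P] fun ω => (1 - rexp (-(ν * A ω))) / ν := by
    filter_upwards [hAnn'] with ω hω
    have : rexp (-(ν * A ω)) ≤ 1 := Real.exp_le_one_iff.mpr (by nlinarith)
    exact div_nonneg (by linarith) hν.le
  rw [integral_eq_lintegral_of_nonneg_ae hmin_nn (hA.min hD).aestronglyMeasurable, key,
    ← ofReal_integral_eq_lintegral_ofReal hrhs_int hrhs_nn,
    ENNReal.toReal_ofReal (integral_nonneg_of_ae hrhs_nn)]
  rw [integral_div, integral_sub (integrable_const 1) hexp_int, integral_const, probReal_univ]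
  simp

/-- the coordinates of the invariant fluid solution are determined by its
norm via `z_i* = λ E[min(‖z*‖₁ B_1^i, D)] − λ E[min(‖z*‖₁ B_1^{i-1}, D)]`, where
`B_1^k` is the partial sum of the first `k` service requirements (`B_1^0 = 0`). -/
theorem invariant_coordinates_from_norm
    {Ω : Type*} [MeasurableSpace Ω] (P : Measure Ω) [IsProbabilityMeasure P]
    (n : ℕ) (lam ν : ℝ) (hlam : 0 < lam) (hν : 0 < ν)
    (μ : Fin (n + 1) → ℝ) (hμ : ∀ i, 0 < μ i)
    (hover : 1 < lam * ∑ i, 1 / μ i)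
    (B : Fin (n + 1) → Ω → ℝ) (D : Ω → ℝ)
    (hmB : ∀ l, Measurable (B l)) (hmD : Measurable D)
    (hindep : iIndepFun
      (Fin.cons D B : Fin (n + 2) → Ω → ℝ) P)
    (hB : ∀ l, Measure.map (B l) P = expMeasure (μ l))
    (hD : Measure.map D P = expMeasure ν)
    (z : Fin (n + 1) → ℝ) (hz : ∀ i, 0 < z i)
    (heq0 : lam - μ 0 * z 0 / (∑ j, z j) - ν * z 0 = 0)
    (heqi : ∀ i : Fin (n + 1), i ≠ 0 →
      μ (i - 1) * z (i - 1) / (∑ j, z j) - μ i * z i / (∑ j, z j) - ν * z i = 0) :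
    ∀ i : Fin (n + 1),
      z i =
        lam * (∫ ω,
          min ((∑ j, z j) * ∑ l : Fin (n + 1), if (l : ℕ) < (i : ℕ) + 1 then B l ω else 0)
            (D ω) ∂P)
        - lam * ∫ ω,
            min ((∑ j, z j) * ∑ l : Fin (n + 1), if (l : ℕ) < (i : ℕ) then B l ω else 0)
              (D ω) ∂P := by
  intro i
  set c : ℝ := ∑ j, z j with hc_def
  have hc : 0 < c := Finset.sum_pos (fun j _ => hz j) Finset.univ_nonempty
  have hdenom : ∀ l, 0 < μ l + ν * c := fun l => by have := hμ l; positivity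
  set X : Fin (n + 2) → Ω → ℝ := (Fin.cons D B : Fin (n + 2) → Ω → ℝ) with hX_def
  have hXm : ∀ j, Measurable (X j) := fun j => Fin.cases hmD hmB j
  -- a.e. nonnegativity of each B l
  have hBnn : ∀ l, ∀ᵐ ω ∂P, 0 ≤ B l ω := by
    intro l
    have h0 : P (B l ⁻¹' (Iio 0)) = 0 := by
      rw [← Measure.map_apply (hmB l) measurableSet_Iio, hB l, expMeasure_Iio_zero]
    rw [ae_iff]
    convert h0 using 2
    ext ω; simp [not_le]
  -- the key integral formula
  have key : ∀ k : ℕ,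
      ∫ ω, min (c * ∑ l : Fin (n + 1), if (l : ℕ) < k then B l ω else 0) (D ω) ∂P
      = (1 - ∏ l : Fin (n + 1), if (l : ℕ) < k then μ l / (μ l + ν * c) else 1) / ν := by
    intro k
    set T : Finset (Fin (n + 2)) :=
      (Finset.univ.filter (fun l : Fin (n + 1) => (l : ℕ) < k)).image Fin.succ with hT
    have h0T : (0 : Fin (n + 2)) ∉ T := by
      simp only [hT, Finset.mem_image]
      rintro ⟨a, -, ha⟩
      exact Fin.succ_ne_zero a ha
    have hsum : ∀ ω, (∑ l : Fin (n + 1), if (l : ℕ) < k then B l ω else 0)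
        = ∑ j ∈ T, X j ω := by
      intro ω
      rw [hT, Finset.sum_image (fun a _ b _ h => Fin.succ_injective _ h), Finset.sum_filter]
      simp [hX_def]
    have hS_meas : Measurable (fun ω => ∑ j ∈ T, X j ω) :=
      Finset.measurable_sum _ fun j _ => hXm j
    have hind2 : IndepFun (fun ω => ∑ j ∈ T, X j ω) D P := by
      have h := hindep.indepFun_finsetSum_of_notMem hXm h0T
      have : X 0 = D := by simp [hX_def]
      rw [this] at h
      convert h using 1
      ext ω
      simp [Finset.sum_apply]
    have hindA : IndepFun (fun ω => c * ∑ j ∈ T, X j ω) D P :=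
      hind2.comp (measurable_const_mul c) measurable_id
    have hAnn : ∀ᵐ ω ∂P, 0 ≤ c * ∑ j ∈ T, X j ω := by
      have hall : ∀ᵐ ω ∂P, ∀ l, 0 ≤ B l ω := ae_all_iff.mpr hBnn
      filter_upwards [hall] with ω hω
      have : 0 ≤ ∑ j ∈ T, X j ω := by
        rw [← hsum ω]
        refine Finset.sum_nonneg fun l _ => ?_
        split
        · exact hω l
        · exact le_rfl
      exact mul_nonneg hc.le this
    have hmgfB : ∀ l : Fin (n + 1), mgf (B l) P (-(ν * c)) = μ l / (μ l + ν * c) := by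
      intro l
      rw [mgf]
      have h1 : ∫ ω, rexp (-(ν * c) * B l ω) ∂P
          = ∫ x, rexp (-(ν * c * x)) ∂(Measure.map (B l) P) := by
        rw [integral_map (hmB l).aemeasurable
          (by fun_prop : Measurable fun x : ℝ => rexp (-(ν * c * x))).aestronglyMeasurable]
        congr 1; ext ω; ring_nf
      rw [h1, hB l, integral_exp_neg_expMeasure (hμ l) (by positivity)]
    have hexp : ∫ ω, rexp (-(ν * (c * ∑ j ∈ T, X j ω))) ∂P
        = ∏ l : Fin (n + 1), if (l : ℕ) < k then μ l / (μ l + ν * c) else 1 := by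
      have h2 : ∫ ω, rexp (-(ν * (c * ∑ j ∈ T, X j ω))) ∂P
          = mgf (∑ j ∈ T, X j) P (-(ν * c)) := by
        rw [mgf]; congr 1; ext ω; simp only [Finset.sum_apply]; ring_nf
      rw [h2, hindep.mgf_sum hXm T, hT,
        Finset.prod_image (fun a _ b _ h => Fin.succ_injective _ h), Finset.prod_filter]
      refine Finset.prod_congr rfl fun l _ => ?_
      split
      · rw [show X (Fin.succ l) = B l by simp [hX_def]]
        exact hmgfB l
      · rfl
    calc ∫ ω, min (c * ∑ l : Fin (n + 1), if (l : ℕ) < k then B l ω else 0) (D ω) ∂P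
        = ∫ ω, min (c * ∑ j ∈ T, X j ω) (D ω) ∂P := by
          apply integral_congr_ae; filter_upwards with ω; rw [hsum ω]
      _ = (1 - ∫ ω, rexp (-(ν * (c * ∑ j ∈ T, X j ω))) ∂P) / ν :=
          integral_min_exp_indep P hν (hS_meas.const_mul c) hmD hAnn hD hindA
      _ = _ := by rw [hexp]
  have hQstep : ∀ j : Fin (n + 1),
      (∏ l : Fin (n + 1), if (l : ℕ) < (j : ℕ) + 1 then μ l / (μ l + ν * c) else 1)
      = (∏ l : Fin (n + 1), if (l : ℕ) < (j : ℕ) then μ l / (μ l + ν * c) else 1) * (μ j / (μ j + ν * c)) := by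
    intro j
    rw [← Finset.prod_filter, ← Finset.prod_filter]
    have hins : Finset.univ.filter (fun l : Fin (n + 1) => (l : ℕ) < (j : ℕ) + 1)
        = insert j (Finset.univ.filter (fun l : Fin (n + 1) => (l : ℕ) < (j : ℕ))) := by
      ext l
      simp only [Finset.mem_filter, Finset.mem_univ, true_and, Finset.mem_insert,
        Nat.lt_succ_iff_lt_or_eq, Fin.ext_iff]
      tauto
    rw [hins, Finset.prod_insert (by simp)]
    ring
  have hformula : ∀ j : Fin (n + 1),
      z j = lam * c * (∏ l : Fin (n + 1), if (l : ℕ) < (j : ℕ) then μ l / (μ l + ν * c) else 1)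
        / (μ j + ν * c) := by
    intro j
    induction j using Fin.induction with
    | zero =>
        have h0 : (∏ l : Fin (n + 1), if (l : ℕ) < ((0 : Fin (n + 1)) : ℕ) then μ l / (μ l + ν * c) else 1)
            = 1 := by simp
        rw [h0]
        have h := heq0
        have hd0 := hdenom 0
        field_simp at h ⊢
        rw [eq_div_iff (by intro h'; linarith)]
        linarith [h]
    | succ j ih =>
        have hne : (j.succ : Fin (n + 1)) ≠ 0 := Fin.succ_ne_zero j
        have hsub : (j.succ : Fin (n + 1)) - 1 = j.castSucc := by
          ext
          rw [Fin.coe_sub_one, if_neg hne]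
          simp
        have h := heqi j.succ hne
        rw [hsub] at h
        have hd1 := hdenom j.succ
        have hd2 := hdenom j.castSucc
        have hzsucc : z j.succ = μ j.castSucc * z j.castSucc / (μ j.succ + ν * c) := by
          field_simp at h ⊢
          rw [eq_div_iff (by intro h'; linarith)]
          linarith [h]
        rw [hzsucc, ih]
        have hstep := hQstep j.castSucc
        simp only [Fin.coe_castSucc] at hstep
        simp only [Fin.val_succ, hstep, Fin.coe_castSucc]
        field_simp
  rw [key ((i : ℕ) + 1), key (i : ℕ), hformula i, hQstep i]
  have hdi := hdenom i
  set Q : ℝ := ∏ l : Fin (n + 1), if (l : ℕ) < (i : ℕ) then μ l / (μ l + ν * c) else 1 with hQ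
  have hdi' : c * ν + μ i ≠ 0 := by rw [mul_comm, add_comm]; exact hdi.ne'
  field_simp
  linear_combination Q * mul_inv_cancel₀ hdi'
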